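/- arXiv:math/9909029 — 2 statements merged into one kernel-verified Lean document; each statement's English description precedes it below -/
import Mathlib

section
/- In the fast function forcing F at an inaccessible cardinal κ, below the condition p = {⟨κ, α⟩} the poset F ↾ p factors as F_κ × F_{γ,κ} where γ = max{κ, α}: every condition q ≤ p decomposes uniquely into its part with domain below κ (a condition of F) and its part with domain in (γ, ∞), and the map q ↦ (small part, tail part) is an order isomorphism onto the product. -/
open FirstOrder

/-- The language of set theory: one binary relation (membership). -/
def memLang : Language :=
  { Functions := fun _ => Empty
    Relations := fun n => match n with | 2 => Unit | _ => Empty }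

/-- Any set of `ZFSet`s (the elements of a `ZFSet`) is a structure for the
language of set theory, interpreting the relation as membership. -/
instance zfSubStructure (M : ZFSet) : memLang.Structure {x : ZFSet // x ∈ M} where
  funMap := fun {n} f _ => nomatch f
  RelMap := fun {n} r =>
    match n, r with
    | 2, _ => fun v => (v 0).1 ∈ (v 1).1

/-- `M` is a transitive set. -/
def ZTrans (M : ZFSet) : Prop := ∀ x ∈ M, ∀ y ∈ x, y ∈ M

/-- The cardinality of (the set of elements of) a `ZFSet`. -/
noncomputable def zCard (x : ZFSet) : Cardinal := Cardinal.mk x.toSet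

/-- `M` has the same size as `κ`. -/
def HasSize (M κ : ZFSet) : Prop := zCard M = zCard κ

/-- `M` is closed under `<κ`-sequences (in `V`): every set-function from an
ordinal `α ∈ κ` into `M` is an element of `M`. -/
def SeqClosed (κ M : ZFSet) : Prop :=
  ∀ α ∈ κ, ∀ f : ZFSet, ZFSet.IsFunc α M f → f ∈ M

/-- An elementary embedding from `M` to `N` (for the language of set theory),
coded as a set `j` of ordered pairs. -/
def ElemEmbSet (M N j : ZFSet) : Prop :=
  ZFSet.IsFunc M N j ∧
  ∀ (n : ℕ) (φ : memLang.Formula (Fin n))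
    (v : Fin n → {x : ZFSet // x ∈ M}) (w : Fin n → {x : ZFSet // x ∈ N}),
    (∀ i, ZFSet.pair (v i).1 (w i).1 ∈ j) → (φ.Realize v ↔ φ.Realize w)

/-- `X` is an elementary substructure of `N` (both viewed as ∈-structures). -/
def ElemSub (X N : ZFSet) : Prop :=
  X ⊆ N ∧
  ∀ (n : ℕ) (φ : memLang.Formula (Fin n))
    (v : Fin n → {x : ZFSet // x ∈ X}) (w : Fin n → {x : ZFSet // x ∈ N}),
    (∀ i, (v i).1 = (w i).1) → (φ.Realize v ↔ φ.Realize w)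

/-- The (set-coded) map `j` has critical point `κ`: it fixes every ordinal
below `κ` and moves `κ` (i.e. `κ < j(κ)`). -/
def CritPt (j κ : ZFSet) : Prop :=
  (∀ x ∈ κ, ZFSet.pair x x ∈ j) ∧ ∀ y, ZFSet.pair κ y ∈ j → κ ∈ y

/-- A transitive model of (a sufficient fragment of) ZF⁻ : transitivity,
emptyset, infinity, pairing, union, and the separation and collection schemas
for the language of set theory. -/
def ModelsZFm (M : ZFSet) : Prop :=
  ZTrans M ∧ (∅ : ZFSet) ∈ M ∧ ZFSet.omega ∈ M ∧
  (∀ x ∈ M, ∀ y ∈ M, ({x, y} : ZFSet) ∈ M) ∧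
  (∀ x ∈ M, ZFSet.sUnion x ∈ M) ∧
  (∀ (n : ℕ) (φ : memLang.Formula (Fin (n + 1))) (v : Fin n → {x : ZFSet // x ∈ M}),
    ∀ a ∈ M, ∃ b ∈ M, ∀ z : ZFSet,
      z ∈ b ↔ ∃ hz : z ∈ M, z ∈ a ∧ φ.Realize (Fin.snoc v ⟨z, hz⟩)) ∧
  (∀ (n : ℕ) (φ : memLang.Formula (Fin (n + 2))) (v : Fin n → {x : ZFSet // x ∈ M}),
    ∀ a ∈ M, ∃ b ∈ M, ∀ x, ∀ hx : x ∈ M, x ∈ a →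
      (∃ y : {x : ZFSet // x ∈ M}, φ.Realize (Fin.snoc (Fin.snoc v ⟨x, hx⟩) y)) →
      ∃ y, ∃ hy : y ∈ M, y ∈ b ∧ φ.Realize (Fin.snoc (Fin.snoc v ⟨x, hx⟩) ⟨y, hy⟩))

/-- A transitive model of ZFC⁻ : ZF⁻ together with choice. -/
def ModelsZFCm (M : ZFSet) : Prop :=
  ModelsZFm M ∧
  ∀ x ∈ M, (∀ y ∈ x, y ≠ ∅) →
    ∃ f ∈ M, ZFSet.IsFunc x (ZFSet.sUnion x) f ∧ ∀ y ∈ x, ∃ z ∈ y, ZFSet.pair y z ∈ f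

/-- A nice model (for `κ`): a transitive model of ZFC⁻ of size `κ` containing
`κ` and closed under `<κ`-sequences. -/
def NiceModel (κ M : ZFSet) : Prop :=
  ZTrans M ∧ HasSize M κ ∧ κ ∈ M ∧ SeqClosed κ M ∧ ModelsZFCm M

/-- `κ` is a cardinal (an initial ordinal) in the `ZFSet` sense. -/
def IsZCardinal (κ : ZFSet) : Prop :=
  κ.IsOrdinal ∧ ∀ α ∈ κ, zCard α < zCard κ

/-- `κ` is an inaccessible cardinal (in the `ZFSet` sense). -/
def IsInaccZ (κ : ZFSet) : Prop :=
  IsZCardinal κ ∧ (zCard κ).IsInaccessible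

/-- `p ≤ q` in the order coded by the set of pairs `le`. -/
def zle (le p q : ZFSet) : Prop := ZFSet.pair p q ∈ le

/-- `G` is a filter on the poset with conditions `P` and order `le`. -/
def IsFilterOn (P le : ZFSet) (G : Set ZFSet) : Prop :=
  (∀ p ∈ G, p ∈ P) ∧ G.Nonempty ∧
  (∀ p ∈ G, ∀ q, q ∈ P → zle le p q → q ∈ G) ∧
  (∀ p ∈ G, ∀ q ∈ G, ∃ r ∈ G, zle le r p ∧ zle le r q)

/-- `D` is a dense subset of the poset `(P, le)`. -/
def ZDense (P le D : ZFSet) : Prop :=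
  D ⊆ P ∧ ∀ p ∈ P, ∃ q ∈ D, zle le q p

/-- `D` is open in the poset `(P, le)`. -/
def ZOpen (P le D : ZFSet) : Prop :=
  ∀ p ∈ D, ∀ q, q ∈ P → zle le q p → q ∈ D

/-- `G` meets every dense subset of `(P, le)` that belongs to `N`. -/
def MeetsDenseIn (P le N : ZFSet) (G : Set ZFSet) : Prop :=
  ∀ D, D ∈ N → ZDense P le D → ∃ p ∈ G, p ∈ D

/-- `f` is (coded as) an injective function from `A` to `B`. -/
def IsInjFuncSet (A B f : ZFSet) : Prop :=
  ZFSet.IsFunc A B f ∧ ∀ a a' b, ZFSet.pair a b ∈ f → ZFSet.pair a' b ∈ f → a = a'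

/-- `f` is (coded as) a bijection from `A` to `B`. -/
def IsBijFuncSet (A B f : ZFSet) : Prop :=
  IsInjFuncSet A B f ∧ ∀ b ∈ B, ∃ a ∈ A, ZFSet.pair a b ∈ f

/-- `π` is an ∈-isomorphism of `X` with `N₀` (e.g. a Mostowski collapse). -/
def EpsIso (X N₀ π : ZFSet) : Prop :=
  IsBijFuncSet X N₀ π ∧
  ∀ x y x' y', ZFSet.pair x x' ∈ π → ZFSet.pair y y' ∈ π → (x ∈ y ↔ x' ∈ y')

/-- `s` is a finite sequence of elements of `θ`, i.e. a function from some
`n ∈ ω` into `θ`; `s ∈ θ^{<ω}`. -/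
def FinSeqIn (θ s : ZFSet) : Prop :=
  ∃ n ∈ ZFSet.omega, ZFSet.IsFunc n θ s

/-- `z` belongs to the seed hull `{ j(g)(s) : g ∈ M a function, s ∈ θ^{<ω} }`. -/
def InHull (M j θ z : ZFSet) : Prop :=
  ∃ g ∈ M, (∃ d r, ZFSet.IsFunc d r g) ∧
    ∃ jg, ZFSet.pair g jg ∈ j ∧ ∃ s, FinSeqIn θ s ∧ ZFSet.pair s z ∈ jg

/-- `κ` is `θ`-unfoldable: every nice model has an elementary embedding with
critical point `κ` sending `κ` to an ordinal `≥ θ`. -/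
def ThetaUnfoldable (κ θ : ZFSet) : Prop :=
  ∀ M, NiceModel κ M →
    ∃ N j, ZTrans N ∧ ElemEmbSet M N j ∧ CritPt j κ ∧
      ∀ y, ZFSet.pair κ y ∈ j → θ ⊆ y

/-- `κ` is unfoldable. -/
def Unfoldable (κ : ZFSet) : Prop :=
  ∀ θ : ZFSet, θ.IsOrdinal → ThetaUnfoldable κ θ

/-- `γ` is in the domain of the (set-coded) partial function `p`. -/
def ffDom (p γ : ZFSet) : Prop := ∃ δ, ZFSet.pair γ δ ∈ p

/-- `p` is a condition of the fast function forcing at `Λ`: a partial function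
`p : Λ → Λ` of size `< Λ` such that every `γ ∈ dom p` is inaccessible,
`p″γ ⊆ γ`, and `|p ↾ γ| < γ`. -/
def IsFFCond (Λ p : ZFSet) : Prop :=
  (∀ z ∈ p, ∃ γ δ, γ ∈ Λ ∧ δ ∈ Λ ∧ z = ZFSet.pair γ δ) ∧
  (∀ γ δ δ', ZFSet.pair γ δ ∈ p → ZFSet.pair γ δ' ∈ p → δ = δ') ∧
  zCard p < zCard Λ ∧
  ∀ γ, ffDom p γ →
    IsInaccZ γ ∧
    (∀ x δ, ZFSet.pair x δ ∈ p → x ∈ γ → δ ∈ γ) ∧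
    zCard (ZFSet.sep (fun z => ∃ x δ, x ∈ γ ∧ z = ZFSet.pair x δ) p) < zCard γ

/-- A condition of the tail fast function forcing `F_{γ,κ}`: a fast function
condition at `κ` whose domain is contained in `(γ, κ)`. -/
def TailCond (κ γ t : ZFSet) : Prop :=
  IsFFCond κ t ∧ ∀ x, ffDom t x → γ ∈ x

/-- The von Neumann ordinal `1`. -/
def zOne : ZFSet := {∅}

/-- The von Neumann ordinal `2`. -/
def zTwo : ZFSet := {∅, {∅}}

/-- A condition of `Add(κ,θ)`: a partial function `p : θ × κ → 2` of
size `< κ`. -/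
def AddCond (κ θ p : ZFSet) : Prop :=
  (∀ z ∈ p, ∃ i ∈ θ, ∃ ξ ∈ κ, ∃ b ∈ zTwo, z = ZFSet.pair (ZFSet.pair i ξ) b) ∧
  (∀ a b b', ZFSet.pair a b ∈ p → ZFSet.pair a b' ∈ p → b = b') ∧
  zCard p < zCard κ

/-- A condition of `Add(κ,1)`: a partial function `p : κ → 2` of size `< κ`. -/
def AddCond1 (κ p : ZFSet) : Prop :=
  (∀ z ∈ p, ∃ ξ ∈ κ, ∃ b ∈ zTwo, z = ZFSet.pair ξ b) ∧
  (∀ ξ b b', ZFSet.pair ξ b ∈ p → ZFSet.pair ξ b' ∈ p → b = b') ∧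
  zCard p < zCard κ

/-- `val` is the interpretation-of-names function determined by the filter
`G` : `val τ = { val σ : ∃ p ∈ G, ⟨σ, p⟩ ∈ τ }`. -/
def IsValFun (G : Set ZFSet) (val : ZFSet → ZFSet) : Prop :=
  ∀ τ z, z ∈ val τ ↔ ∃ σ p, p ∈ G ∧ ZFSet.pair σ p ∈ τ ∧ z = val σ

/-- `G` is a `V`-generic filter for the forcing `Add(κ,θ)` (ordered by
reverse inclusion): a filter meeting every dense class of conditions. -/
def VGenericAdd (κ θ : ZFSet) (G : Set ZFSet) : Prop :=
  (∀ p ∈ G, AddCond κ θ p) ∧ G.Nonempty ∧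
  (∀ p ∈ G, ∀ q, AddCond κ θ q → q ⊆ p → q ∈ G) ∧
  (∀ p ∈ G, ∀ q ∈ G, ∃ r ∈ G, p ⊆ r ∧ q ⊆ r) ∧
  (∀ D : Set ZFSet, (∀ p, AddCond κ θ p → ∃ q ∈ D, AddCond κ θ q ∧ p ⊆ q) →
    ∃ p ∈ G, p ∈ D)

/-- A set `b` is definable (with parameters) over the ∈-structure `U`. -/
def DefOver (U b : ZFSet) : Prop :=
  b ⊆ U ∧ ∃ (n : ℕ) (φ : memLang.Formula (Fin (n + 1)))
    (v : Fin n → {x : ZFSet // x ∈ U}),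
    ∀ z : ZFSet, z ∈ b ↔ ∃ hz : z ∈ U, φ.Realize (Fin.snoc v ⟨z, hz⟩)

/-- Membership in the constructible universe built from the hierarchy `LS`. -/
def InLvia (LS : ZFSet → ZFSet) (z : ZFSet) : Prop :=
  ∃ o : ZFSet, o.IsOrdinal ∧ z ∈ LS o

/-- `M` has size `κ` as witnessed inside the class `C`. -/
def HasSizeIn (C : ZFSet → Prop) (M κ : ZFSet) : Prop :=
  ∃ f, C f ∧ IsBijFuncSet κ M f

/-- `M` is closed under those `<κ`-sequences belonging to the class `C`. -/
def SeqClosedIn (C : ZFSet → Prop) (κ M : ZFSet) : Prop :=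
  ∀ α ∈ κ, ∀ f : ZFSet, C f → ZFSet.IsFunc α M f → f ∈ M

/-- A nice model for `κ`, relativized to the class `C`. -/
def NiceModelIn (C : ZFSet → Prop) (κ M : ZFSet) : Prop :=
  C M ∧ ZTrans M ∧ HasSizeIn C M κ ∧ κ ∈ M ∧ SeqClosedIn C κ M ∧ ModelsZFCm M

/-- `κ` is unfoldable, relativized to the class `C`. -/
def UnfoldableIn (C : ZFSet → Prop) (κ : ZFSet) : Prop :=
  ∀ θ : ZFSet, θ.IsOrdinal → C θ → ∀ M, NiceModelIn C κ M →
    ∃ N j, C N ∧ C j ∧ ZTrans N ∧ ElemEmbSet M N j ∧ CritPt j κ ∧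
      ∀ y, ZFSet.pair κ y ∈ j → θ ⊆ y

/-- `κ` is strongly unfoldable, relativized to the class `C`: the target `N`
may additionally be required to contain `(V_θ)^C`. -/
noncomputable def StronglyUnfoldableIn (C : ZFSet → Prop) (κ : ZFSet) : Prop :=
  ∀ θ : ZFSet, θ.IsOrdinal → C θ → ∀ M, NiceModelIn C κ M →
    ∃ N j, C N ∧ C j ∧ ZTrans N ∧ ElemEmbSet M N j ∧ CritPt j κ ∧
      (∀ y, ZFSet.pair κ y ∈ j → θ ⊆ y) ∧
      ∀ x : ZFSet, C x → x.rank < θ.rank → x ∈ N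

/-! ### Auxiliary lemmas for the factorization theorem -/

namespace FFAux

open ZFSet

/-- A member of an ordinal is an ordinal. -/
theorem mem_isOrdinal {x y : ZFSet} (hx : x.IsOrdinal) (hy : y ∈ x) : y.IsOrdinal := by
  constructor
  · intro a ha b hb
    exact hx.mem_trans' hb ha hy
  · intro a b c hab hbc hcy
    exact hx.mem_trans' hab hbc (hx.mem_trans hcy hy)

/-- Trichotomy for ZF-ordinals. -/
theorem ord_trich : ∀ x : ZFSet, x.IsOrdinal → ∀ y : ZFSet, y.IsOrdinal →
    x ∈ y ∨ x = y ∨ y ∈ x := by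
  intro x
  induction x using ZFSet.inductionOn with
  | _ x IH1 =>
    intro hx y
    induction y using ZFSet.inductionOn with
    | _ y IH2 =>
      intro hy
      by_cases hxy : x ∈ y
      · exact Or.inl hxy
      by_cases hyx : y ∈ x
      · exact Or.inr (Or.inr hyx)
      refine Or.inr (Or.inl (ZFSet.ext fun a => ⟨fun ha => ?_, fun ha => ?_⟩))
      · rcases IH1 a ha (mem_isOrdinal hx ha) y hy with h | h | h
        · exact h
        · exact absurd (h ▸ ha) hyx
        · exact absurd (hx.mem_trans h ha) hyx
      · rcases IH2 a ha (mem_isOrdinal hy ha) with h | h | h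
        · exact absurd (hy.mem_trans h ha) hxy
        · exact absurd (h ▸ ha) hxy
        · exact h

theorem union_eq_right {a b : ZFSet} (h : a ⊆ b) : a ∪ b = b :=
  ZFSet.ext fun z => ⟨fun hz => (ZFSet.mem_union.1 hz).elim (fun h' => h h') id,
    fun hz => ZFSet.mem_union.2 (Or.inr hz)⟩

theorem union_eq_left {a b : ZFSet} (h : b ⊆ a) : a ∪ b = a :=
  ZFSet.ext fun z => ⟨fun hz => (ZFSet.mem_union.1 hz).elim id (fun h' => h h'),
    fun hz => ZFSet.mem_union.2 (Or.inl hz)⟩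

/-- The union of two ordinals is one of them (hence an ordinal). -/
theorem ord_union_cases {a b : ZFSet} (ha : a.IsOrdinal) (hb : b.IsOrdinal) :
    a ∪ b = a ∨ a ∪ b = b := by
  rcases ord_trich a ha b hb with h | h | h
  · exact Or.inr (union_eq_right (hb.subset_of_mem h))
  · exact Or.inr (union_eq_right (h ▸ fun z hz => hz))
  · exact Or.inl (union_eq_left (ha.subset_of_mem h))

theorem ord_union {a b : ZFSet} (ha : a.IsOrdinal) (hb : b.IsOrdinal) :
    (a ∪ b).IsOrdinal := by
  rcases ord_union_cases ha hb with h | h <;> rw [h] <;> assumption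

theorem left_subset_union {a b : ZFSet} : a ⊆ a ∪ b :=
  fun z hz => ZFSet.mem_union.2 (Or.inl hz)

theorem right_subset_union {a b : ZFSet} : b ⊆ a ∪ b :=
  fun z hz => ZFSet.mem_union.2 (Or.inr hz)

theorem zCard_mono {a b : ZFSet} (h : a ⊆ b) : zCard a ≤ zCard b :=
  Cardinal.mk_le_mk_of_subset (fun z hz => h hz)

theorem zCard_union_le (a b : ZFSet) : zCard (a ∪ b) ≤ zCard a + zCard b := by
  unfold zCard; rw [show (a ∪ b).toSet = a.toSet ∪ b.toSet from ZFSet.coe_union a b]; exact Cardinal.mk_union_le _ _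

theorem zCard_singleton (x : ZFSet) : zCard ({x} : ZFSet) = 1 := by
  unfold zCard; rw [show ({x} : ZFSet).toSet = {x} from ZFSet.coe_singleton x]; exact Cardinal.mk_singleton _

theorem inacc_ord {x : ZFSet} (h : IsInaccZ x) : x.IsOrdinal := h.1.1

theorem inacc_aleph0_lt {x : ZFSet} (h : IsInaccZ x) : Cardinal.aleph0 < zCard x := h.2.1

/-- Sum of two cardinals below an inaccessible stays below. -/
theorem inacc_add_lt {x : ZFSet} (h : IsInaccZ x) {a b : Cardinal}
    (ha : a < zCard x) (hb : b < zCard x) : a + b < zCard x :=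
  Cardinal.add_lt_of_lt (le_of_lt h.2.1) ha hb

/-- The part of `q` with domain below `β`. -/
def FFrestr (β q : ZFSet) : ZFSet :=
  ZFSet.sep (fun z => ∃ x δ, x ∈ β ∧ z = ZFSet.pair x δ) q

/-- The part of `q` with domain above `γ`. -/
def FFtail (γ q : ZFSet) : ZFSet :=
  ZFSet.sep (fun z => ∃ x δ, γ ∈ x ∧ z = ZFSet.pair x δ) q

/-- Gluing the three parts. -/
def FFglue (κ α r t : ZFSet) : ZFSet := r ∪ ({ZFSet.pair κ α} ∪ t)

theorem mem_FFrestr {β q z : ZFSet} :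
    z ∈ FFrestr β q ↔ z ∈ q ∧ ∃ x δ, x ∈ β ∧ z = ZFSet.pair x δ := ZFSet.mem_sep

theorem mem_FFtail {γ q z : ZFSet} :
    z ∈ FFtail γ q ↔ z ∈ q ∧ ∃ x δ, γ ∈ x ∧ z = ZFSet.pair x δ := ZFSet.mem_sep

theorem mem_FFglue {κ α r t z : ZFSet} :
    z ∈ FFglue κ α r t ↔ z ∈ r ∨ z = ZFSet.pair κ α ∨ z ∈ t := by
  simp [FFglue, ZFSet.mem_union, ZFSet.mem_singleton]

theorem FFrestr_subset {β q : ZFSet} : FFrestr β q ⊆ q :=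
  fun z hz => (mem_FFrestr.1 hz).1

theorem FFtail_subset {γ q : ZFSet} : FFtail γ q ⊆ q :=
  fun z hz => (mem_FFtail.1 hz).1

theorem FFrestr_mono {β q q' : ZFSet} (h : q ⊆ q') : FFrestr β q ⊆ FFrestr β q' :=
  fun z hz => mem_FFrestr.2 ⟨h (mem_FFrestr.1 hz).1, (mem_FFrestr.1 hz).2⟩

theorem FFtail_mono {γ q q' : ZFSet} (h : q ⊆ q') : FFtail γ q ⊆ FFtail γ q' :=
  fun z hz => mem_FFtail.2 ⟨h (mem_FFtail.1 hz).1, (mem_FFtail.1 hz).2⟩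

theorem pair_mem_FFrestr {β q x δ : ZFSet} (h : ZFSet.pair x δ ∈ FFrestr β q) :
    ZFSet.pair x δ ∈ q ∧ x ∈ β := by
  obtain ⟨hq, x', δ', hx', heq⟩ := mem_FFrestr.1 h
  obtain ⟨rfl, rfl⟩ := ZFSet.pair_injective heq
  exact ⟨hq, hx'⟩

theorem pair_mem_FFtail {γ q x δ : ZFSet} (h : ZFSet.pair x δ ∈ FFtail γ q) :
    ZFSet.pair x δ ∈ q ∧ γ ∈ x := by
  obtain ⟨hq, x', δ', hx', heq⟩ := mem_FFtail.1 h
  obtain ⟨rfl, rfl⟩ := ZFSet.pair_injective heq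
  exact ⟨hq, hx'⟩

/-- The restriction of a fast-function condition to `κ ∈ dom q` is a condition at `κ`. -/
theorem restr_cond {Λ κ q : ZFSet} (hq : IsFFCond Λ q) (hdom : ffDom q κ) :
    IsFFCond κ (FFrestr κ q) := by
  obtain ⟨hinκ, himgκ, hcardκ⟩ := hq.2.2.2 κ hdom
  refine ⟨?_, ?_, hcardκ, ?_⟩
  · intro z hz
    obtain ⟨hzq, x, δ, hx, rfl⟩ := mem_FFrestr.1 hz
    exact ⟨x, δ, hx, himgκ x δ hzq hx, rfl⟩
  · intro x δ δ' h1 h2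
    exact hq.2.1 x δ δ' (FFrestr_subset h1) (FFrestr_subset h2)
  · intro γ' hdom'
    obtain ⟨δ0, hδ0⟩ := hdom'
    have hdq : ffDom q γ' := ⟨δ0, FFrestr_subset hδ0⟩
    obtain ⟨hin, himg, hcard⟩ := hq.2.2.2 γ' hdq
    refine ⟨hin, fun x δ h hx => himg x δ (FFrestr_subset h) hx, ?_⟩
    calc zCard (ZFSet.sep (fun z => ∃ x δ, x ∈ γ' ∧ z = ZFSet.pair x δ) (FFrestr κ q))
        ≤ zCard (ZFSet.sep (fun z => ∃ x δ, x ∈ γ' ∧ z = ZFSet.pair x δ) q) := by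
          refine zCard_mono fun z hz => ?_
          exact ZFSet.mem_sep.2 ⟨FFrestr_subset (ZFSet.mem_sep.1 hz).1, (ZFSet.mem_sep.1 hz).2⟩
      _ < zCard γ' := hcard

/-- The tail of a fast-function condition is a condition with domain above `γ`. -/
theorem tail_cond {Λ γ q : ZFSet} (hq : IsFFCond Λ q) :
    IsFFCond Λ (FFtail γ q) ∧ ∀ x, ffDom (FFtail γ q) x → γ ∈ x := by
  constructor
  · refine ⟨fun z hz => hq.1 z (FFtail_subset hz),
      fun x δ δ' h1 h2 => hq.2.1 x δ δ' (FFtail_subset h1) (FFtail_subset h2),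
      lt_of_le_of_lt (zCard_mono FFtail_subset) hq.2.2.1, ?_⟩
    intro γ' hdom'
    obtain ⟨δ0, hδ0⟩ := hdom'
    obtain ⟨hin, himg, hcard⟩ := hq.2.2.2 γ' ⟨δ0, FFtail_subset hδ0⟩
    refine ⟨hin, fun x δ h hx => himg x δ (FFtail_subset h) hx, ?_⟩
    calc zCard (ZFSet.sep (fun z => ∃ x δ, x ∈ γ' ∧ z = ZFSet.pair x δ) (FFtail γ q))
        ≤ zCard (ZFSet.sep (fun z => ∃ x δ, x ∈ γ' ∧ z = ZFSet.pair x δ) q) := by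
          refine zCard_mono fun z hz => ?_
          exact ZFSet.mem_sep.2 ⟨FFtail_subset (ZFSet.mem_sep.1 hz).1, (ZFSet.mem_sep.1 hz).2⟩
      _ < zCard γ' := hcard
  · rintro x ⟨δ, hδ⟩
    exact (pair_mem_FFtail hδ).2

end FFAux

namespace FFAux

theorem gam_not_mem_kappa {κ α : ZFSet} : κ ∪ α ∉ κ :=
  fun h => ZFSet.mem_irrefl _ (left_subset_union h)

theorem not_gam_mem {κ α x : ZFSet} (hx : x ∈ κ) : κ ∪ α ∉ x :=
  fun h => ZFSet.mem_asymm (left_subset_union hx) h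

theorem pair_mem_cond {Λ x δ p : ZFSet} (hp : IsFFCond Λ p) (h : ZFSet.pair x δ ∈ p) :
    x ∈ Λ ∧ δ ∈ Λ := by
  obtain ⟨x', δ', hx, hδ, he⟩ := hp.1 _ h
  obtain ⟨rfl, rfl⟩ := ZFSet.pair_injective he
  exact ⟨hx, hδ⟩

/-- Classification of the elements of a condition extending `{⟨κ,α⟩}`. -/
theorem classify {Λ κ α q : ZFSet} (hΛ : IsInaccZ Λ) (hκ : IsInaccZ κ) (hα : α ∈ Λ)
    (hq : IsFFCond Λ q) (hp : ZFSet.pair κ α ∈ q) :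
    ∀ z ∈ q, z ∈ FFrestr κ q ∨ z = ZFSet.pair κ α ∨ z ∈ FFtail (κ ∪ α) q := by
  intro z hz
  obtain ⟨x, δ, hxΛ, hδΛ, rfl⟩ := hq.1 z hz
  obtain ⟨hin, himg, -⟩ := hq.2.2.2 x ⟨δ, hz⟩
  rcases ord_trich x hin.1.1 κ hκ.1.1 with h | hxk | h
  · exact Or.inl (mem_FFrestr.2 ⟨hz, x, δ, h, rfl⟩)
  · have hδα : δ = α := hq.2.1 x δ α hz (hxk ▸ hp)
    exact Or.inr (Or.inl (by rw [hδα, hxk]))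
  · have hαx : α ∈ x := himg κ α hp h
    have hγx : κ ∪ α ∈ x := by
      rcases ord_union_cases hκ.1.1 (mem_isOrdinal hΛ.1.1 hα) with he | he <;> rw [he]
      · exact h
      · exact hαx
    exact Or.inr (Or.inr (mem_FFtail.2 ⟨hz, x, δ, hγx, rfl⟩))

theorem decomp {Λ κ α q : ZFSet} (hΛ : IsInaccZ Λ) (hκ : IsInaccZ κ) (hα : α ∈ Λ)
    (hq : IsFFCond Λ q) (hp : ZFSet.pair κ α ∈ q) :
    q = FFglue κ α (FFrestr κ q) (FFtail (κ ∪ α) q) := by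
  apply ZFSet.ext; intro z
  constructor
  · intro hz
    exact mem_FFglue.2 (classify hΛ hκ hα hq hp z hz)
  · intro hz
    rcases mem_FFglue.1 hz with h | rfl | h
    · exact FFrestr_subset h
    · exact hp
    · exact FFtail_subset h

theorem restr_glue {κ α r t : ZFSet} (hr : IsFFCond κ r)
    (htd : ∀ x, ffDom t x → κ ∪ α ∈ x) :
    FFrestr κ (FFglue κ α r t) = r := by
  apply ZFSet.ext; intro z
  constructor
  · intro hz
    obtain ⟨hzg, x, δ, hxκ, rfl⟩ := mem_FFrestr.1 hz
    rcases mem_FFglue.1 hzg with h | h | h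
    · exact h
    · obtain ⟨hx, -⟩ := ZFSet.pair_injective h
      rw [hx] at hxκ
      exact absurd hxκ (ZFSet.mem_irrefl _)
    · exact absurd (htd x ⟨δ, h⟩) (not_gam_mem hxκ)
  · intro hz
    obtain ⟨x, δ, hxκ, hδκ, rfl⟩ := hr.1 z hz
    exact mem_FFrestr.2 ⟨mem_FFglue.2 (Or.inl hz), x, δ, hxκ, rfl⟩

theorem tail_glue {Λ κ α r t : ZFSet} (hr : IsFFCond κ r) (ht : IsFFCond Λ t)
    (htd : ∀ x, ffDom t x → κ ∪ α ∈ x) :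
    FFtail (κ ∪ α) (FFglue κ α r t) = t := by
  apply ZFSet.ext; intro z
  constructor
  · intro hz
    obtain ⟨hzg, x, δ, hγx, rfl⟩ := mem_FFtail.1 hz
    rcases mem_FFglue.1 hzg with h | h | h
    · exact absurd hγx (not_gam_mem (pair_mem_cond hr h).1)
    · obtain ⟨hx, -⟩ := ZFSet.pair_injective h
      rw [hx] at hγx
      exact absurd hγx gam_not_mem_kappa
    · exact h
  · intro hz
    obtain ⟨x, δ, hx, hδ, rfl⟩ := ht.1 z hz
    exact mem_FFtail.2 ⟨mem_FFglue.2 (Or.inr (Or.inr hz)), x, δ, htd x ⟨δ, hz⟩, rfl⟩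

/-- Gluing produces a valid condition extending `{⟨κ,α⟩}`. -/
theorem glue_cond {Λ κ α r t : ZFSet} (hΛ : IsInaccZ Λ) (hκ : IsInaccZ κ)
    (hκΛ : κ ∈ Λ) (hα : α ∈ Λ) (hr : IsFFCond κ r) (ht : IsFFCond Λ t)
    (htd : ∀ x, ffDom t x → κ ∪ α ∈ x) :
    IsFFCond Λ (FFglue κ α r t) ∧ ({ZFSet.pair κ α} : ZFSet) ⊆ FFglue κ α r t := by
  have hΛo : Λ.IsOrdinal := hΛ.1.1
  have hκo : κ.IsOrdinal := hκ.1.1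
  have hαo : α.IsOrdinal := mem_isOrdinal hΛo hα
  have hγo : (κ ∪ α).IsOrdinal := ord_union hκo hαo
  have hrmem : ∀ x δ : ZFSet, ZFSet.pair x δ ∈ r → x ∈ κ ∧ δ ∈ κ :=
    fun x δ h => pair_mem_cond hr h
  have hpart : ∀ x δ : ZFSet, ZFSet.pair x δ ∈ FFglue κ α r t →
      (ZFSet.pair x δ ∈ r ∧ x ∈ κ) ∨ (x = κ ∧ δ = α) ∨
      (ZFSet.pair x δ ∈ t ∧ κ ∪ α ∈ x) := by
    intro x δ h
    rcases mem_FFglue.1 h with h | h | h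
    · exact Or.inl ⟨h, (hrmem x δ h).1⟩
    · exact Or.inr (Or.inl (ZFSet.pair_injective h))
    · exact Or.inr (Or.inr ⟨h, htd x ⟨δ, h⟩⟩)
  have hzΛ : ∀ z ∈ FFglue κ α r t, ∃ x δ, x ∈ Λ ∧ δ ∈ Λ ∧ z = ZFSet.pair x δ := by
    intro z hz
    rcases mem_FFglue.1 hz with h | rfl | h
    · obtain ⟨x, δ, hx, hδ, rfl⟩ := hr.1 z h
      exact ⟨x, δ, hΛo.mem_trans hx hκΛ, hΛo.mem_trans hδ hκΛ, rfl⟩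
    · exact ⟨κ, α, hκΛ, hα, rfl⟩
    · exact ht.1 z h
  have hfun : ∀ x δ δ' : ZFSet, ZFSet.pair x δ ∈ FFglue κ α r t →
      ZFSet.pair x δ' ∈ FFglue κ α r t → δ = δ' := by
    intro x δ δ' h1 h2
    rcases hpart x δ h1 with ⟨h1r, hx1⟩ | ⟨hk1, hd1⟩ | ⟨h1t, hx1⟩ <;>
      rcases hpart x δ' h2 with ⟨h2r, hx2⟩ | ⟨hk2, hd2⟩ | ⟨h2t, hx2⟩
    · exact hr.2.1 x δ δ' h1r h2r
    · rw [hk2] at hx1; exact absurd hx1 (ZFSet.mem_irrefl _)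
    · exact absurd hx2 (not_gam_mem hx1)
    · rw [hk1] at hx2; exact absurd hx2 (ZFSet.mem_irrefl _)
    · rw [hd1, hd2]
    · rw [hk1] at hx2; exact absurd hx2 gam_not_mem_kappa
    · exact absurd hx1 (not_gam_mem hx2)
    · rw [hk2] at hx1; exact absurd hx1 gam_not_mem_kappa
    · exact ht.2.1 x δ δ' h1t h2t
  have hcard : zCard (FFglue κ α r t) < zCard Λ := by
    have h1 : zCard r < zCard Λ := lt_trans hr.2.2.1 (hΛ.1.2 κ hκΛ)
    have h2 : zCard ({ZFSet.pair κ α} : ZFSet) < zCard Λ := by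
      rw [zCard_singleton]; exact lt_trans Cardinal.one_lt_aleph0 hΛ.2.1
    have h3 : zCard t < zCard Λ := ht.2.2.1
    calc zCard (FFglue κ α r t)
        ≤ zCard r + (zCard ({ZFSet.pair κ α} : ZFSet) + zCard t) :=
          le_trans (zCard_union_le _ _) (add_le_add le_rfl (zCard_union_le _ _))
      _ < zCard Λ := inacc_add_lt hΛ h1 (inacc_add_lt hΛ h2 h3)
  have hdom4 : ∀ γ', ffDom (FFglue κ α r t) γ' → IsInaccZ γ' ∧
      (∀ x δ, ZFSet.pair x δ ∈ FFglue κ α r t → x ∈ γ' → δ ∈ γ') ∧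
      zCard (FFrestr γ' (FFglue κ α r t)) < zCard γ' := by
    rintro γ' ⟨δ0, hδ0⟩
    rcases hpart γ' δ0 hδ0 with ⟨h0r, hγ'κ⟩ | ⟨hk, -⟩ | ⟨h0t, hγγ'⟩
    · -- γ' in the domain of r
      obtain ⟨hin, himg, hcard'⟩ := hr.2.2.2 γ' ⟨δ0, h0r⟩
      refine ⟨hin, ?_, ?_⟩
      · intro x δ hmem hxγ'
        rcases hpart x δ hmem with ⟨hR, _⟩ | ⟨hk2, -⟩ | ⟨hT, hγx⟩
        · exact himg x δ hR hxγ'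
        · rw [hk2] at hxγ'; exact absurd hγ'κ (ZFSet.mem_asymm hxγ')
        · have hxγ : x ∈ κ ∪ α := hγo.mem_trans hxγ' (left_subset_union hγ'κ)
          exact absurd hγx (ZFSet.mem_asymm hxγ)
      · have hsub : FFrestr γ' (FFglue κ α r t) ⊆ FFrestr γ' r := by
          intro z hz
          obtain ⟨hzg, x, δ, hxγ', rfl⟩ := mem_FFrestr.1 hz
          rcases hpart x δ hzg with ⟨hR, _⟩ | ⟨hk2, -⟩ | ⟨hT, hγx⟩
          · exact mem_FFrestr.2 ⟨hR, x, δ, hxγ', rfl⟩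
          · rw [hk2] at hxγ'; exact absurd hγ'κ (ZFSet.mem_asymm hxγ')
          · have hxγ : x ∈ κ ∪ α := hγo.mem_trans hxγ' (left_subset_union hγ'κ)
            exact absurd hγx (ZFSet.mem_asymm hxγ)
        exact lt_of_le_of_lt (zCard_mono hsub) hcard'
    · -- γ' = κ
      have hk' := hk.symm
      subst hk'
      refine ⟨hκ, ?_, ?_⟩
      · intro x δ hmem hxκ
        rcases hpart x δ hmem with ⟨hR, _⟩ | ⟨hk2, -⟩ | ⟨hT, hγx⟩
        · exact (hrmem x δ hR).2
        · rw [hk2] at hxκ; exact absurd hxκ (ZFSet.mem_irrefl _)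
        · exact absurd hγx (not_gam_mem hxκ)
      · have hsub : FFrestr κ (FFglue κ α r t) ⊆ r := by
          intro z hz
          obtain ⟨hzg, x, δ, hxκ, rfl⟩ := mem_FFrestr.1 hz
          rcases hpart x δ hzg with ⟨hR, _⟩ | ⟨hk2, -⟩ | ⟨hT, hγx⟩
          · exact hR
          · rw [hk2] at hxκ; exact absurd hxκ (ZFSet.mem_irrefl _)
          · exact absurd hγx (not_gam_mem hxκ)
        exact lt_of_le_of_lt (zCard_mono hsub) hr.2.2.1
    · -- γ' in the domain of t
      obtain ⟨hin, himg, hcard'⟩ := ht.2.2.2 γ' ⟨δ0, h0t⟩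
      have hγ'o : γ'.IsOrdinal := hin.1.1
      have hκγ' : κ ∈ γ' := by
        rcases ord_trich κ hκo (κ ∪ α) hγo with h | h | h
        · exact hγ'o.mem_trans h hγγ'
        · rw [h]; exact hγγ'
        · exact absurd h gam_not_mem_kappa
      have hαγ' : α ∈ γ' := by
        rcases ord_trich α hαo (κ ∪ α) hγo with h | h | h
        · exact hγ'o.mem_trans h hγγ'
        · rw [h]; exact hγγ'
        · exact absurd h (fun h' => ZFSet.mem_irrefl _ (right_subset_union h'))
      refine ⟨hin, ?_, ?_⟩
      · intro x δ hmem hxγ'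
        rcases hpart x δ hmem with ⟨hR, _⟩ | ⟨hk2, hd2⟩ | ⟨hT, _⟩
        · exact hγ'o.mem_trans (hrmem x δ hR).2 hκγ'
        · rw [hd2]; exact hαγ'
        · exact himg x δ hT hxγ'
      · have hsub : FFrestr γ' (FFglue κ α r t) ⊆
            r ∪ ({ZFSet.pair κ α} ∪ FFrestr γ' t) := by
          intro z hz
          obtain ⟨hzg, x, δ, hxγ', rfl⟩ := mem_FFrestr.1 hz
          rcases mem_FFglue.1 hzg with h | h | h
          · exact ZFSet.mem_union.2 (Or.inl h)
          · exact ZFSet.mem_union.2 (Or.inr (ZFSet.mem_union.2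
              (Or.inl (ZFSet.mem_singleton.2 h))))
          · exact ZFSet.mem_union.2 (Or.inr (ZFSet.mem_union.2
              (Or.inr (mem_FFrestr.2 ⟨h, x, δ, hxγ', rfl⟩))))
        have hcard'' : zCard (FFrestr γ' t) < zCard γ' := hcard'
        have h1 : zCard r < zCard γ' := lt_trans hr.2.2.1 (hin.1.2 κ hκγ')
        have h2 : zCard ({ZFSet.pair κ α} : ZFSet) < zCard γ' := by
          rw [zCard_singleton]; exact lt_trans Cardinal.one_lt_aleph0 hin.2.1
        calc zCard (FFrestr γ' (FFglue κ α r t))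
            ≤ zCard (r ∪ ({ZFSet.pair κ α} ∪ FFrestr γ' t)) := zCard_mono hsub
          _ ≤ zCard r + (zCard ({ZFSet.pair κ α} : ZFSet) + zCard (FFrestr γ' t)) :=
              le_trans (zCard_union_le _ _) (add_le_add le_rfl (zCard_union_le _ _))
          _ < zCard γ' := inacc_add_lt hin h1 (inacc_add_lt hin h2 hcard'')
  refine ⟨⟨hzΛ, hfun, hcard, hdom4⟩, fun z hz => ?_⟩
  exact mem_FFglue.2 (Or.inr (Or.inl (ZFSet.mem_singleton.1 hz)))

end FFAux

/-- In the fast function forcing at an inaccessible `Λ`, below the condition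
`p = {⟨κ, α⟩}` the forcing factors as `F_κ × F_{γ,Λ}` with `γ = max(κ,α)`:
the map sending a condition `q ⊇ p` to its part with domain below `κ` and its
part with domain above `γ` is an order isomorphism onto the product. -/


theorem fast_function_factorization (Λ κ α : ZFSet)
    (hΛ : IsInaccZ Λ) (hκ : IsInaccZ κ) (hκΛ : κ ∈ Λ) (hα : α ∈ Λ) :
    ∃ e : {q : ZFSet // IsFFCond Λ q ∧ ({ZFSet.pair κ α} : ZFSet) ⊆ q} ≃
          ({r : ZFSet // IsFFCond κ r} ×
           {t : ZFSet // IsFFCond Λ t ∧ ∀ x, ffDom t x → κ ∪ α ∈ x}),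
      (∀ q, (e q).1.1 =
          ZFSet.sep (fun z => ∃ x δ, x ∈ κ ∧ z = ZFSet.pair x δ) q.1 ∧
        (e q).2.1 =
          ZFSet.sep (fun z => ∃ x δ, κ ∪ α ∈ x ∧ z = ZFSet.pair x δ) q.1) ∧
      ∀ q q', q.1 ⊆ q'.1 ↔ ((e q).1.1 ⊆ (e q').1.1 ∧ (e q).2.1 ⊆ (e q').2.1) := by
  have hsing : ∀ q : ZFSet, ({ZFSet.pair κ α} : ZFSet) ⊆ q → ZFSet.pair κ α ∈ q :=
    fun q h => h (ZFSet.mem_singleton.2 rfl)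
  refine ⟨⟨fun q => (⟨FFAux.FFrestr κ q.1, FFAux.restr_cond q.2.1 ⟨α, hsing q.1 q.2.2⟩⟩,
      ⟨FFAux.FFtail (κ ∪ α) q.1, (FFAux.tail_cond q.2.1).1, (FFAux.tail_cond q.2.1).2⟩),
    fun rt => ⟨FFAux.FFglue κ α rt.1.1 rt.2.1,
      (FFAux.glue_cond hΛ hκ hκΛ hα rt.1.2 rt.2.2.1 rt.2.2.2).1,
      (FFAux.glue_cond hΛ hκ hκΛ hα rt.1.2 rt.2.2.1 rt.2.2.2).2⟩,
    fun q => Subtype.ext (FFAux.decomp hΛ hκ hα q.2.1 (hsing q.1 q.2.2)).symm,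
    fun rt => ?_⟩, fun q => ⟨rfl, rfl⟩, fun q q' => ⟨fun h =>
      ⟨FFAux.FFrestr_mono h, FFAux.FFtail_mono h⟩, fun h => ?_⟩⟩
  · obtain ⟨⟨r, hr⟩, ⟨t, ht⟩⟩ := rt
    exact Prod.ext (Subtype.ext (FFAux.restr_glue hr ht.2))
      (Subtype.ext (FFAux.tail_glue hr ht.1 ht.2))
  · intro z hz
    rcases FFAux.classify hΛ hκ hα q.2.1 (hsing q.1 q.2.2) z hz with h1 | rfl | h1
    · exact FFAux.FFrestr_subset (h.1 h1)
    · exact hsing q'.1 q'.2.2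
    · exact FFAux.FFtail_subset (h.2 h1)
end

section
/- The tail fast function forcing F_{γ,κ}, consisting of partial functions q : κ → κ of size < κ with dom(q) ⊆ (γ, κ), every element of dom(q) inaccessible, q″δ ⊆ δ and |q ↾ δ| < δ for δ ∈ dom(q), ordered by inclusion, is ≤γ-closed: every descending chain of conditions of length ≤ γ has a lower bound, namely its union. -/
open FirstOrder

/-- Every element of a von Neumann ordinal is a von Neumann ordinal. -/
theorem zfMemIsOrdinal {x y : ZFSet} (hx : x.IsOrdinal) (h : y ∈ x) : y.IsOrdinal where
  isTransitive := fun a ha b hb => hx.mem_trans' hb ha h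
  mem_trans' := fun {a b c} hab hbc hcy =>
    hx.mem_trans' hab hbc (hx.isTransitive.mem_trans hcy h)

/-- Trichotomy for von Neumann ordinals. -/
theorem zfOrdTrichotomy : ∀ x y : ZFSet, x.IsOrdinal → y.IsOrdinal →
    x ∈ y ∨ x = y ∨ y ∈ x := by
  intro x
  induction x using ZFSet.mem_wf.induction with
  | _ x IH1 =>
    intro y
    induction y using ZFSet.mem_wf.induction with
    | _ y IH2 =>
      intro hx hy
      by_cases hxy : x ∈ y
      · exact Or.inl hxy
      by_cases hyx : y ∈ x
      · exact Or.inr (Or.inr hyx)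
      refine Or.inr (Or.inl (ZFSet.ext fun z => ⟨fun hz => ?_, fun hz => ?_⟩))
      · rcases IH1 z hz y (zfMemIsOrdinal hx hz) hy with h | h | h
        · exact h
        · exact absurd (h ▸ hz) hyx
        · exact absurd (hx.isTransitive.mem_trans h hz) hyx
      · rcases IH2 z hz hx (zfMemIsOrdinal hy hz) with h | h | h
        · exact absurd (hy.isTransitive.mem_trans h hz) hxy
        · exact absurd (h ▸ hz) hxy
        · exact h

theorem zfCardMono' {x y : ZFSet} (h : x ⊆ y) : zCard x ≤ zCard y :=
  Cardinal.mk_le_mk_of_subset fun z hz => h hz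

theorem zfCardUnionLt (s : ZFSet) (f : ZFSet → ZFSet) (u : ZFSet)
    (hu : ∀ z, z ∈ u ↔ ∃ i ∈ s, z ∈ f i) {c : Cardinal}
    (hreg : c.IsRegular) (hs : zCard s < c) (hf : ∀ i ∈ s, zCard (f i) < c) :
    zCard u < c := by
  have hset : u.toSet = ⋃ i : s.toSet, (f i.1).toSet := by
    ext z
    simp only [Set.mem_iUnion]
    change z ∈ u ↔ ∃ i : s.toSet, z ∈ f i.1
    rw [hu]
    exact ⟨fun ⟨i, hi, h⟩ => ⟨⟨i, hi⟩, h⟩, fun ⟨⟨i, hi⟩, h⟩ => ⟨i, hi, h⟩⟩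
  have h1 : zCard u ≤ Cardinal.mk s.toSet * ⨆ i : s.toSet, Cardinal.mk (f i.1).toSet := by
    rw [zCard, hset]; exact Cardinal.mk_iUnion_le _
  refine h1.trans_lt (Cardinal.mul_lt_of_lt hreg.aleph0_le hs ?_)
  exact Cardinal.iSup_lt_of_isRegular hreg hs fun i => hf i.1 i.2

/-- The tail fast function forcing `F_{γ,κ}` is `≤γ`-closed: every descending
chain of conditions of length `≤ γ` has a lower bound, namely its union. -/
theorem tail_forcing_closed (κ γ lam : ZFSet)
    (hκ : IsInaccZ κ) (hγ : γ.IsOrdinal) (hγκ : γ ∈ κ)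
    (hlam : lam.IsOrdinal) (hlamγ : lam ⊆ γ)
    (q : ZFSet → ZFSet)
    (hcond : ∀ i ∈ lam, TailCond κ γ (q i))
    (hdesc : ∀ i ∈ lam, ∀ i' ∈ lam, i ∈ i' → q i ⊆ q i') :
    ∃ u : ZFSet, (∀ z, z ∈ u ↔ ∃ i ∈ lam, z ∈ q i) ∧
      TailCond κ γ u ∧ ∀ i ∈ lam, q i ⊆ u := by
  classical
  haveI : ZFSet.Definable₁ q := Classical.allZFSetDefinable _
  set u : ZFSet := ZFSet.sUnion (ZFSet.image q lam) with hu_def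
  have hum : ∀ z, z ∈ u ↔ ∃ i ∈ lam, z ∈ q i := by
    intro z
    rw [hu_def, ZFSet.mem_sUnion]
    constructor
    · rintro ⟨w, hw, hzw⟩
      rcases ZFSet.mem_image.1 hw with ⟨i, hi, rfl⟩
      exact ⟨i, hi, hzw⟩
    · rintro ⟨i, hi, hzi⟩
      exact ⟨q i, ZFSet.mem_image.2 ⟨i, hi, rfl⟩, hzi⟩
  -- directedness of the chain
  have hdir : ∀ i ∈ lam, ∀ i' ∈ lam, ∃ j ∈ lam, q i ⊆ q j ∧ q i' ⊆ q j := by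
    intro i hi i' hi'
    rcases zfOrdTrichotomy i i' (zfMemIsOrdinal hlam hi) (zfMemIsOrdinal hlam hi')
      with h | h | h
    · exact ⟨i', hi', hdesc i hi i' hi' h, fun z hz => hz⟩
    · subst h; exact ⟨i, hi, fun z hz => hz, fun z hz => hz⟩
    · exact ⟨i, hi, fun z hz => hz, hdesc i' hi' i hi h⟩
  obtain ⟨⟨hκord, hκcard⟩, hκinacc⟩ := hκ
  have hκreg : (zCard κ).IsRegular := hκinacc.isRegular
  have hlamκ : zCard lam < zCard κ := lt_of_le_of_lt (zfCardMono' hlamγ) (hκcard γ hγκ)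
  refine ⟨u, hum, ⟨⟨?_, ?_, ?_, ?_⟩, ?_⟩, ?_⟩
  · -- pairs below κ
    intro z hz
    rcases (hum z).1 hz with ⟨i, hi, hzi⟩
    exact (hcond i hi).1.1 z hzi
  · -- functionality
    intro a d d' hd hd'
    rcases (hum _).1 hd with ⟨i, hi, hdi⟩
    rcases (hum _).1 hd' with ⟨i', hi', hdi'⟩
    rcases hdir i hi i' hi' with ⟨j, hj, hij, hij'⟩
    exact (hcond j hj).1.2.1 a d d' (hij hdi) (hij' hdi')
  · -- size < κ
    exact zfCardUnionLt lam q u hum hκreg hlamκ fun i hi => (hcond i hi).1.2.2.1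
  · -- closure points
    rintro a ⟨d0, hd0⟩
    rcases (hum _).1 hd0 with ⟨i₀, hi₀, hd0i₀⟩
    have hffa : ffDom (q i₀) a := ⟨d0, hd0i₀⟩
    obtain ⟨hainacc, _, _⟩ := (hcond i₀ hi₀).1.2.2.2 a hffa
    have hareg : (zCard a).IsRegular := hainacc.2.isRegular
    have haγ : γ ∈ a := (hcond i₀ hi₀).2 a hffa
    have hlama : zCard lam < zCard a :=
      lt_of_le_of_lt (zfCardMono' hlamγ) (hainacc.1.2 γ haγ)
    refine ⟨hainacc, ?_, ?_⟩
    · intro x d hxd hxa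
      rcases (hum _).1 hxd with ⟨i', hi', hxdi'⟩
      rcases hdir i₀ hi₀ i' hi' with ⟨j, hj, hj₀, hj'⟩
      exact ((hcond j hj).1.2.2.2 a ⟨d0, hj₀ hd0i₀⟩).2.1 x d (hj' hxdi') hxa
    · -- restriction below a is small
      set p : ZFSet → Prop := fun z => ∃ x δ, x ∈ a ∧ z = ZFSet.pair x δ with hp
      refine zfCardUnionLt lam (fun i => ZFSet.sep p (q i)) (ZFSet.sep p u) ?_
        hareg hlama ?_
      · intro z
        simp only [ZFSet.mem_sep]
        constructor
        · rintro ⟨hzu, hpz⟩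
          rcases (hum z).1 hzu with ⟨i, hi, hzi⟩
          exact ⟨i, hi, hzi, hpz⟩
        · rintro ⟨i, hi, hzi, hpz⟩
          exact ⟨(hum z).2 ⟨i, hi, hzi⟩, hpz⟩
      · intro i hi
        rcases zfOrdTrichotomy i i₀ (zfMemIsOrdinal hlam hi) (zfMemIsOrdinal hlam hi₀)
          with h | h | h
        · refine lt_of_le_of_lt (zfCardMono' ?_) (((hcond i₀ hi₀).1.2.2.2 a hffa).2.2)
          intro z hz
          rw [ZFSet.mem_sep] at hz ⊢
          exact ⟨hdesc i hi i₀ hi₀ h hz.1, hz.2⟩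
        · subst h
          exact ((hcond i hi).1.2.2.2 a hffa).2.2
        · exact ((hcond i hi).1.2.2.2 a ⟨d0, hdesc i₀ hi₀ i hi h hd0i₀⟩).2.2
  · -- tail condition
    rintro x ⟨d, hd⟩
    rcases (hum _).1 hd with ⟨i, hi, hdi⟩
    exact (hcond i hi).2 x ⟨d, hdi⟩
  · -- lower bound
    intro i hi z hz
    exact (hum z).2 ⟨i, hi, hz⟩
end
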